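/- arXiv:1401.3612 — 13 statements merged into one kernel-verified Lean document; each statement's English description precedes it below -/
import Mathlib

section
/- A norm on an infinite-dimensional real Banach space X is octahedral if and only if for every n ∈ ℕ, every x₁,…,xₙ ∈ S_X, and every ε > 0 there exists y ∈ S_X such that ‖xᵢ - y‖ ≥ 2 - ε for all i ∈ {1,…,n}. -/
open Metric

def Octahedral (X : Type*) [NormedAddCommGroup X] [NormedSpace ℝ X] : Prop :=
  ∀ (E : Submodule ℝ X), FiniteDimensional ℝ E → ∀ ε : ℝ, 0 < ε →
    ∃ y : X, ‖y‖ = 1 ∧ ∀ x ∈ E, (1 - ε) * (‖x‖ + ‖y‖) ≤ ‖x - y‖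

private lemma key {X : Type*} [NormedAddCommGroup X] [NormedSpace ℝ X] {u y : X}
    (hu : ‖u‖ = 1) (hy : ‖y‖ = 1) {δ : ℝ} (h : 2 - δ ≤ ‖u - y‖) {t : ℝ} (ht : 0 ≤ t) :
    (1 - δ) * (t + 1) ≤ ‖t • u - y‖ := by
  have hub : ‖u - y‖ ≤ 2 := by
    calc ‖u - y‖ ≤ ‖u‖ + ‖y‖ := norm_sub_le _ _
    _ = 2 := by rw [hu, hy]; norm_num
  have hδ : 0 ≤ δ := by linarith
  rcases le_total t 1 with h1 | h1
  · have e : u - y = (t • u - y) + (1 - t) • u := by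
      rw [sub_smul, one_smul]; abel
    have hn : ‖(1 - t) • u‖ = 1 - t := by
      rw [norm_smul, hu, mul_one, Real.norm_eq_abs, abs_of_nonneg (by linarith)]
    have htri : ‖u - y‖ ≤ ‖t • u - y‖ + ‖(1 - t) • u‖ := e ▸ norm_add_le _ _
    rw [hn] at htri
    nlinarith
  · have e : t • (u - y) = (t • u - y) - (t - 1) • y := by
      rw [smul_sub, sub_smul, one_smul]; abel
    have h2 : ‖t • (u - y)‖ = t * ‖u - y‖ := by
      rw [norm_smul, Real.norm_eq_abs, abs_of_nonneg ht]
    have h3 : ‖(t - 1) • y‖ = t - 1 := by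
      rw [norm_smul, hy, mul_one, Real.norm_eq_abs, abs_of_nonneg (by linarith)]
    have htri : ‖t • (u - y)‖ ≤ ‖t • u - y‖ + ‖(t - 1) • y‖ := e ▸ norm_sub_le _ _
    rw [h2, h3] at htri
    nlinarith

theorem stmt0 {X : Type*} [NormedAddCommGroup X] [NormedSpace ℝ X] [CompleteSpace X]
    (hinf : ¬ FiniteDimensional ℝ X) :
    Octahedral X ↔
      ∀ (n : ℕ) (x : Fin n → X), (∀ i, ‖x i‖ = 1) → ∀ ε : ℝ, 0 < ε →
        ∃ y : X, ‖y‖ = 1 ∧ ∀ i, 2 - ε ≤ ‖x i - y‖ := by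
  constructor
  · intro hoct n x hx ε hε
    have hfin : FiniteDimensional ℝ (Submodule.span ℝ (Set.range x)) :=
      FiniteDimensional.span_of_finite ℝ (Set.finite_range x)
    obtain ⟨y, hy, hyle⟩ := hoct _ hfin (ε / 2) (by linarith)
    refine ⟨y, hy, fun i => ?_⟩
    have := hyle (x i) (Submodule.subset_span (Set.mem_range_self i))
    rw [hx i, hy] at this
    linarith
  · intro H E hE ε hε
    set ε' := min ε (1/2) with hε'def
    have hε'pos : 0 < ε' := lt_min hε (by norm_num)
    have hε'le : ε' ≤ ε := min_le_left _ _
    suffices h : ∃ y : X, ‖y‖ = 1 ∧ ∀ x ∈ E, (1 - ε') * (‖x‖ + ‖y‖) ≤ ‖x - y‖ by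
      obtain ⟨y, hy, hle⟩ := h
      refine ⟨y, hy, fun x hx => le_trans ?_ (hle x hx)⟩
      have : 0 ≤ ‖x‖ + ‖y‖ := by positivity
      nlinarith
    haveI := hE
    have hcomp : IsCompact ((Subtype.val : E → X) '' (sphere (0 : E) 1)) :=
      (isCompact_sphere (0 : E) 1).image continuous_subtype_val
    obtain ⟨t, hts, htfin, htcov⟩ := hcomp.finite_cover_balls (half_pos hε'pos)
    set l := htfin.toFinset.toList with hl
    set f : Fin l.length → X := fun i => l.get i with hf
    have hmem : ∀ z ∈ t, ∃ i, f i = z := by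
      intro z hz
      have : z ∈ l := by simp [hl, htfin]; exact hz
      obtain ⟨i, hi⟩ := List.mem_iff_get.mp this
      exact ⟨i, hi⟩
    have hnorm : ∀ i, ‖f i‖ = 1 := by
      intro i
      have : f i ∈ t := by
        have : f i ∈ l := by simpa [hf] using l.get_mem i i.isLt
        simpa [hl, htfin] using this
      obtain ⟨e, he, hee⟩ := hts this
      rw [← hee]
      simpa [dist_eq_norm] using he
    obtain ⟨y, hy, hyle⟩ := H l.length f hnorm (ε' / 2) (half_pos hε'pos)
    refine ⟨y, hy, fun x hx => ?_⟩
    rcases eq_or_ne x 0 with rfl | hx0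
    · simp [hy]
      nlinarith [hε'pos]
    · have hxn : 0 < ‖x‖ := norm_pos_iff.mpr hx0
      set u : X := ‖x‖⁻¹ • x with hu
      have hun : ‖u‖ = 1 := by
        rw [hu, norm_smul, Real.norm_eq_abs, abs_of_pos (inv_pos.mpr hxn),
          inv_mul_cancel₀ hxn.ne']
      have huE : u ∈ ((Subtype.val : E → X) '' (sphere (0 : E) 1)) := by
        refine ⟨⟨u, E.smul_mem _ hx⟩, ?_, rfl⟩
        simpa [dist_eq_norm] using hun
      obtain ⟨z, hzt, hzu⟩ := Set.mem_iUnion₂.mp (htcov huE)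
      obtain ⟨i, hi⟩ := hmem z hzt
      have hdist : ‖u - f i‖ < ε' / 2 := by
        rw [hi, ← dist_eq_norm]; rw [mem_ball] at hzu; exact hzu
      have hkey : 2 - ε' ≤ ‖u - y‖ := by
        have h1 := hyle i
        have h2 : ‖f i - y‖ ≤ ‖u - y‖ + ‖u - f i‖ := by
          have := norm_add_le (u - y) (f i - u)
          have e : (u - y) + (f i - u) = f i - y := by abel
          rw [e] at this
          have : ‖f i - y‖ ≤ ‖u - y‖ + ‖f i - u‖ := this
          rwa [norm_sub_rev (f i) u] at this
        linarith
      have := key hun hy hkey hxn.le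
      have hxu : ‖x‖ • u = x := by
        rw [hu, smul_smul, mul_inv_cancel₀ hxn.ne', one_smul]
      rw [hxu] at this
      rw [hy]
      linarith
end

section
/- The norm on a Banach space X is octahedral if and only if μ₂(X) = 2, where μ₂(X) = inf over finite sequences x₁,…,xₙ ∈ S_X of sup_{x ∈ S_X} (1/n) Σᵢ ‖xᵢ - x‖. -/
open Metric

noncomputable def mu2 (X : Type*) [NormedAddCommGroup X] : ℝ :=
  sInf {c : ℝ | ∃ (n : ℕ) (x : Fin (n + 1) → X), (∀ i, ‖x i‖ = 1) ∧
    c = sSup {s : ℝ | ∃ z : X, ‖z‖ = 1 ∧ s = (1 / (n + 1 : ℝ)) * ∑ i, ‖x i - z‖}}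

/-- Homogeneity lemma: if a unit vector `z` is almost at distance 2 from every unit
vector of `E`, then it almost "adds norms" against every vector of `E`. -/
private lemma key_homog {X : Type*} [NormedAddCommGroup X] [NormedSpace ℝ X]
    {E : Submodule ℝ X} {z : X} {δ : ℝ} (hδ : 0 ≤ δ) (hz : ‖z‖ = 1)
    (h : ∀ u ∈ E, ‖u‖ = 1 → 2 - δ ≤ ‖u - z‖) :
    ∀ x ∈ E, (1 - δ) * (‖x‖ + ‖z‖) ≤ ‖x - z‖ := by
  intro x hx
  rcases eq_or_ne x 0 with rfl | hx0
  · have h0 : ‖(0 : X) - z‖ = 1 := by rw [zero_sub, norm_neg, hz]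
    rw [h0, norm_zero, hz]
    nlinarith
  · have ht0 : 0 < ‖x‖ := norm_pos_iff.mpr hx0
    set t := ‖x‖ with ht
    set u := t⁻¹ • x with hu_def
    have hu : u ∈ E := E.smul_mem _ hx
    have hun : ‖u‖ = 1 := by
      rw [hu_def, norm_smul, Real.norm_eq_abs, abs_of_pos (inv_pos.mpr ht0), ← ht]
      field_simp
    have hz2 : 2 - δ ≤ ‖u - z‖ := h u hu hun
    have hxu : x = t • u := by
      rw [hu_def, smul_smul, mul_inv_cancel₀ (ne_of_gt ht0), one_smul]
    rcases le_or_gt t 1 with h1 | h1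
    · have h2 : ‖u - x‖ = 1 - t := by
        have huv : u - x = (1 - t) • u := by rw [hxu]; module
        rw [huv, norm_smul, hun, Real.norm_eq_abs, abs_of_nonneg (by linarith), mul_one]
      have h3 : ‖u - z‖ ≤ ‖u - x‖ + ‖x - z‖ := by
        have huv : u - z = (u - x) + (x - z) := by abel
        rw [huv]; exact norm_add_le _ _
      rw [hz]
      nlinarith [ht0.le]
    · have hsplit : t • (u - z) = (x - z) - (t - 1) • z := by rw [hxu]; module
      have h4 : ‖t • (u - z)‖ ≤ ‖x - z‖ + ‖(t - 1) • z‖ := by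
        rw [hsplit]; exact norm_sub_le _ _
      rw [norm_smul, norm_smul, hz, Real.norm_eq_abs, Real.norm_eq_abs,
        abs_of_pos ht0, abs_of_nonneg (by linarith : (0:ℝ) ≤ t - 1), mul_one] at h4
      have h5 : t * (2 - δ) ≤ t * ‖u - z‖ := mul_le_mul_of_nonneg_left hz2 ht0.le
      rw [hz]
      nlinarith

private lemma avg_le_two {X : Type*} [NormedAddCommGroup X]
    {n : ℕ} {x : Fin (n + 1) → X} (hxn : ∀ i, ‖x i‖ = 1) :
    ∀ s ∈ {s : ℝ | ∃ z : X, ‖z‖ = 1 ∧ s = (1 / (n + 1 : ℝ)) * ∑ i, ‖x i - z‖}, s ≤ 2 := by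
  rintro s ⟨z, hz, rfl⟩
  have hterm : ∀ i, ‖x i - z‖ ≤ 2 := fun i => by
    calc ‖x i - z‖ ≤ ‖x i‖ + ‖z‖ := norm_sub_le _ _
    _ = 2 := by rw [hxn i, hz]; norm_num
  have hsum : ∑ i, ‖x i - z‖ ≤ (n + 1 : ℝ) * 2 := by
    calc ∑ i, ‖x i - z‖ ≤ ∑ _i : Fin (n + 1), (2:ℝ) :=
          Finset.sum_le_sum (fun i _ => hterm i)
    _ = (n + 1 : ℝ) * 2 := by
          rw [Finset.sum_const, Finset.card_univ, Fintype.card_fin, nsmul_eq_mul]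
          push_cast; ring
  have hpos : (0:ℝ) < (n + 1 : ℝ) := by positivity
  rw [one_div, inv_mul_eq_div, div_le_iff₀ hpos]
  linarith

theorem stmt1 {X : Type*} [NormedAddCommGroup X] [NormedSpace ℝ X] [CompleteSpace X] :
    Octahedral X ↔ mu2 X = 2 := by
  constructor
  · intro hoct
    obtain ⟨y₀, hy₀, -⟩ := hoct ⊥ inferInstance 1 one_pos
    have key : ∀ (n : ℕ) (x : Fin (n + 1) → X), (∀ i, ‖x i‖ = 1) →
        sSup {s : ℝ | ∃ z : X, ‖z‖ = 1 ∧ s = (1 / (n + 1 : ℝ)) * ∑ i, ‖x i - z‖} = 2 := by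
      intro n x hxn
      set S := {s : ℝ | ∃ z : X, ‖z‖ = 1 ∧ s = (1 / (n + 1 : ℝ)) * ∑ i, ‖x i - z‖} with hS
      have hne : S.Nonempty := ⟨_, y₀, hy₀, rfl⟩
      have hbdd : BddAbove S := ⟨2, avg_le_two hxn⟩
      refine le_antisymm (csSup_le hne (avg_le_two hxn)) ?_
      have h2 : ∀ ε : ℝ, 0 < ε → 2 - 2 * ε ≤ sSup S := by
        intro ε hε
        obtain ⟨y, hy, hylb⟩ := hoct (Submodule.span ℝ (Set.range x))
          (FiniteDimensional.span_of_finite ℝ (Set.finite_range x)) ε hε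
        have hterm : ∀ i, 2 - 2 * ε ≤ ‖x i - y‖ := fun i => by
          have h := hylb (x i) (Submodule.subset_span ⟨i, rfl⟩)
          rw [hxn i, hy] at h; linarith
        have hpos : (0:ℝ) < (n + 1 : ℝ) := by positivity
        have havg : 2 - 2 * ε ≤ (1 / (n + 1 : ℝ)) * ∑ i, ‖x i - y‖ := by
          have hsum : (n + 1 : ℝ) * (2 - 2 * ε) ≤ ∑ i, ‖x i - y‖ := by
            calc (n + 1 : ℝ) * (2 - 2 * ε) = ∑ _i : Fin (n + 1), (2 - 2 * ε) := by
                  rw [Finset.sum_const, Finset.card_univ, Fintype.card_fin, nsmul_eq_mul]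
                  push_cast; ring
            _ ≤ _ := Finset.sum_le_sum (fun i _ => hterm i)
          rw [one_div, inv_mul_eq_div, le_div_iff₀ hpos]
          linarith
        exact le_trans havg (le_csSup hbdd ⟨y, hy, rfl⟩)
      by_contra hlt
      push_neg at hlt
      have := h2 ((2 - sSup S) / 4) (by linarith)
      linarith
    unfold mu2
    have hMeq : {c : ℝ | ∃ (n : ℕ) (x : Fin (n + 1) → X), (∀ i, ‖x i‖ = 1) ∧
        c = sSup {s : ℝ | ∃ z : X, ‖z‖ = 1 ∧ s = (1 / (n + 1 : ℝ)) * ∑ i, ‖x i - z‖}} = {2} := by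
      apply Set.eq_singleton_iff_unique_mem.mpr
      constructor
      · exact ⟨0, fun _ => y₀, fun _ => hy₀, (key 0 _ (fun _ => hy₀)).symm⟩
      · rintro c ⟨n, x, hxn, rfl⟩
        exact key n x hxn
    rw [hMeq, csInf_singleton]
  · intro hmu
    set M := {c : ℝ | ∃ (n : ℕ) (x : Fin (n + 1) → X), (∀ i, ‖x i‖ = 1) ∧
        c = sSup {s : ℝ | ∃ z : X, ‖z‖ = 1 ∧ s = (1 / (n + 1 : ℝ)) * ∑ i, ‖x i - z‖}} with hM
    have hmu' : sInf M = 2 := hmu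
    have hMne : M.Nonempty := by
      by_contra hne
      rw [Set.not_nonempty_iff_eq_empty] at hne
      rw [hne, Real.sInf_empty] at hmu'
      norm_num at hmu'
    obtain ⟨c₀, n₀, x₀f, hx₀f, -⟩ := hMne
    set x₀ := x₀f 0 with hx₀def
    have hx₀ : ‖x₀‖ = 1 := hx₀f 0
    have hMbdd : BddBelow M := by
      refine ⟨0, ?_⟩
      rintro c ⟨n, x, hxn, rfl⟩
      have havg : (0:ℝ) ≤ (1 / (n + 1 : ℝ)) * ∑ i, ‖x i - x₀‖ := by positivity
      exact le_trans havg (le_csSup ⟨2, avg_le_two hxn⟩ ⟨x₀, hx₀, rfl⟩)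
    intro E hE ε hε
    haveI := hE
    set ε' := min ε 2⁻¹ with hε'def
    have hε'pos : 0 < ε' := lt_min hε (by norm_num)
    have hε'le : ε' ≤ ε := min_le_left _ _
    set δ := ε' / 2 with hδdef
    have hδpos : 0 < δ := by positivity
    -- the unit sphere of E as a compact subset of X
    have hcpt : IsCompact ((Subtype.val : E → X) '' (sphere (0:E) 1)) :=
      (isCompact_sphere (0:E) 1).image continuous_subtype_val
    have himg : (Subtype.val : E → X) '' (sphere (0:E) 1) = {u : X | u ∈ E ∧ ‖u‖ = 1} := by
      ext u
      constructor
      · rintro ⟨v, hv, rfl⟩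
        rw [mem_sphere_zero_iff_norm] at hv
        exact ⟨v.2, by rw [← Submodule.coe_norm, hv]⟩
      · rintro ⟨huE, hun⟩
        exact ⟨⟨u, huE⟩, by rw [mem_sphere_zero_iff_norm, Submodule.coe_norm]; exact hun, rfl⟩
    obtain ⟨t, hts, htfin, htcov⟩ :=
      Metric.finite_approx_of_totallyBounded hcpt.totallyBounded δ hδpos
    rw [himg] at hts htcov
    -- enumerate the net (augmented by x₀) by Fin (n+1)
    have hsfin : (insert x₀ t).Finite := htfin.insert x₀
    set F := hsfin.toFinset with hFdef
    have hFne : F.Nonempty := ⟨x₀, by simp [hFdef]⟩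
    obtain ⟨n, hn⟩ : ∃ n, F.card = n + 1 :=
      ⟨F.card - 1, (Nat.succ_pred_eq_of_pos hFne.card_pos).symm⟩
    set xf : Fin (n + 1) → X := fun i => ((F.equivFin.symm (Fin.cast hn.symm i)) : X)
      with hxfdef
    have hmemF : ∀ i, xf i ∈ insert x₀ t := fun i =>
      hsfin.mem_toFinset.mp (F.equivFin.symm (Fin.cast hn.symm i)).2
    have hxf_unit : ∀ i, ‖xf i‖ = 1 := by
      intro i
      rcases hmemF i with h | h
      · rw [h]; exact hx₀
      · exact ((hts h).2)
    have hxf_surj : ∀ u ∈ insert x₀ t, ∃ i, xf i = u := by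
      intro u hu
      refine ⟨Fin.cast hn (F.equivFin ⟨u, hsfin.mem_toFinset.mpr hu⟩), ?_⟩
      have : Fin.cast hn.symm (Fin.cast hn (F.equivFin ⟨u, hsfin.mem_toFinset.mpr hu⟩)) =
          F.equivFin ⟨u, hsfin.mem_toFinset.mpr hu⟩ := rfl
      rw [hxfdef]
      simp only [this, Equiv.symm_apply_apply]
    set S := {s : ℝ | ∃ z : X, ‖z‖ = 1 ∧ s = (1 / (n + 1 : ℝ)) * ∑ i, ‖xf i - z‖} with hSdef
    have hSne : S.Nonempty := ⟨_, x₀, hx₀, rfl⟩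
    have h2le : 2 ≤ sSup S := by
      have hmem : sSup S ∈ M := ⟨n, xf, hxf_unit, rfl⟩
      have := csInf_le hMbdd hmem
      linarith [hmu'.symm.le.trans this]
    set η := δ / (n + 1) with hηdef
    have hpos : (0:ℝ) < (n + 1 : ℝ) := by positivity
    have hηpos : 0 < η := by positivity
    obtain ⟨sv, ⟨z, hzn, rfl⟩, hsv⟩ :=
      exists_lt_of_lt_csSup hSne (show 2 - η < sSup S by linarith)
    have hterm2 : ∀ i, ‖xf i - z‖ ≤ 2 := fun i => by
      calc ‖xf i - z‖ ≤ ‖xf i‖ + ‖z‖ := norm_sub_le _ _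
      _ = 2 := by rw [hxf_unit i, hzn]; norm_num
    have hsv' : (2 - η) * (n + 1 : ℝ) < ∑ i, ‖xf i - z‖ := by
      rw [one_div, inv_mul_eq_div, lt_div_iff₀ hpos] at hsv
      exact hsv
    have hη' : (n + 1 : ℝ) * η = δ := by
      rw [hηdef]; field_simp
    have hper : ∀ j, 2 - δ ≤ ‖xf j - z‖ := by
      intro j
      have hsplit : ‖xf j - z‖ + ∑ i ∈ Finset.univ.erase j, ‖xf i - z‖ = ∑ i, ‖xf i - z‖ :=
        Finset.add_sum_erase _ (fun i => ‖xf i - z‖) (Finset.mem_univ j)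
      have hrest : ∑ i ∈ Finset.univ.erase j, ‖xf i - z‖ ≤ (n : ℝ) * 2 := by
        calc ∑ i ∈ Finset.univ.erase j, ‖xf i - z‖ ≤ ∑ _i ∈ Finset.univ.erase j, (2:ℝ) :=
              Finset.sum_le_sum (fun i _ => hterm2 i)
        _ = (n : ℝ) * 2 := by
              rw [Finset.sum_const, Finset.card_erase_of_mem (Finset.mem_univ j),
                Finset.card_univ, Fintype.card_fin, nsmul_eq_mul]
              norm_num
      nlinarith [hsplit, hrest, hsv', hη']
    have hsph : ∀ u ∈ E, ‖u‖ = 1 → 2 - ε' ≤ ‖u - z‖ := by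
      intro u huE hun
      have hucov : u ∈ ⋃ y ∈ t, ball y δ := htcov ⟨huE, hun⟩
      rw [Set.mem_iUnion₂] at hucov
      obtain ⟨p, hpt, hup⟩ := hucov
      obtain ⟨i, rfl⟩ := hxf_surj p (Set.mem_insert_of_mem _ hpt)
      rw [mem_ball, dist_eq_norm] at hup
      have htri : ‖xf i - z‖ ≤ ‖u - xf i‖ + ‖u - z‖ := by
        have hd : xf i - z = -(u - xf i) + (u - z) := by abel
        rw [hd]
        calc ‖-(u - xf i) + (u - z)‖ ≤ ‖-(u - xf i)‖ + ‖u - z‖ := norm_add_le _ _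
        _ = ‖u - xf i‖ + ‖u - z‖ := by rw [norm_neg]
      have := hper i
      have hδε : 2 * δ = ε' := by rw [hδdef]; ring
      linarith
    refine ⟨z, hzn, fun x hx => ?_⟩
    have hkey := key_homog hε'pos.le hzn hsph x hx
    have hmono : (1 - ε) * (‖x‖ + ‖z‖) ≤ (1 - ε') * (‖x‖ + ‖z‖) :=
      mul_le_mul_of_nonneg_right (by linarith) (by positivity)
    linarith
end

section
/- If the norm on a Banach space X is octahedral, then whenever finitely many closed balls B(x₁,r₁),…,B(xₙ,rₙ) (with centers xᵢ ∈ X and radii rᵢ > 0) cover the unit sphere S_X, there exists an index i such that S_X ⊆ B(xᵢ, rᵢ) (equivalently, rᵢ ≥ ‖xᵢ‖ + 1). -/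
open Metric

theorem stmt2 {X : Type*} [NormedAddCommGroup X] [NormedSpace ℝ X] [CompleteSpace X]
    (hoct : Octahedral X) (n : ℕ) (x : Fin n → X) (r : Fin n → ℝ) (hr : ∀ i, 0 < r i)
    (hcov : sphere (0 : X) 1 ⊆ ⋃ i, closedBall (x i) (r i)) :
    ∃ i, sphere (0 : X) 1 ⊆ closedBall (x i) (r i) ∧ ‖x i‖ + 1 ≤ r i := by
  have key : ∃ i, ‖x i‖ + 1 ≤ r i := by
    by_contra hno
    push_neg at hno
    rcases Nat.eq_zero_or_pos n with hn | hn
    · obtain ⟨y, hy1, -⟩ := hoct ⊥ inferInstance 1 one_pos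
      have hy : y ∈ sphere (0 : X) 1 := by simpa [mem_sphere_iff_norm] using hy1
      obtain ⟨i, -⟩ := Set.mem_iUnion.1 (hcov hy)
      exact absurd i.2 (by omega)
    · haveI : Nonempty (Fin n) := ⟨⟨0, hn⟩⟩
      set c := Finset.univ.inf' Finset.univ_nonempty
        (fun i => (‖x i‖ + 1 - r i) / (‖x i‖ + 1)) with hc
      have hnpos : ∀ i, (0:ℝ) < ‖x i‖ + 1 := fun i => by positivity
      have hcpos : 0 < c := by
        rw [hc, Finset.lt_inf'_iff]
        intro i _
        exact div_pos (by linarith [hno i]) (hnpos i)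
      haveI : FiniteDimensional ℝ (Submodule.span ℝ (Set.range x)) :=
        FiniteDimensional.span_of_finite ℝ (Set.finite_range x)
      obtain ⟨y, hy1, hy2⟩ := hoct (Submodule.span ℝ (Set.range x)) inferInstance
        (c / 2) (half_pos hcpos)
      have hy : y ∈ sphere (0 : X) 1 := by simpa [mem_sphere_iff_norm] using hy1
      obtain ⟨i, hi⟩ := Set.mem_iUnion.1 (hcov hy)
      have hdist : ‖x i - y‖ ≤ r i := by
        rw [mem_closedBall, dist_eq_norm] at hi
        rwa [norm_sub_rev]
      have hle := hy2 (x i) (Submodule.subset_span ⟨i, rfl⟩)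
      rw [hy1] at hle
      have hci : c ≤ (‖x i‖ + 1 - r i) / (‖x i‖ + 1) :=
        Finset.inf'_le _ (Finset.mem_univ i)
      have hci' : c * (‖x i‖ + 1) ≤ ‖x i‖ + 1 - r i :=
        (le_div_iff₀ (hnpos i)).1 hci
      nlinarith [hnpos i, hr i]
  obtain ⟨i, hi⟩ := key
  refine ⟨i, fun z hz => ?_, hi⟩
  rw [mem_sphere_zero_iff_norm] at hz
  rw [mem_closedBall, dist_eq_norm]
  calc ‖z - x i‖ ≤ ‖z‖ + ‖x i‖ := norm_sub_le _ _
    _ = ‖x i‖ + 1 := by rw [hz]; ring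
    _ ≤ r i := hi
end

section
/- Suppose X is a Banach space such that whenever finitely many closed balls centered at points of S_X cover S_X, one of the balls contains all of S_X. Then the norm on X is octahedral. -/
open Metric

theorem stmt3 {X : Type*} [NormedAddCommGroup X] [NormedSpace ℝ X] [CompleteSpace X]
    (h : ∀ (n : ℕ) (x : Fin n → X) (r : Fin n → ℝ), (∀ i, ‖x i‖ = 1) → (∀ i, 0 < r i) →
      sphere (0 : X) 1 ⊆ ⋃ i, closedBall (x i) (r i) →
      ∃ i, sphere (0 : X) 1 ⊆ closedBall (x i) (r i)) :
    Octahedral X := by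
  classical
  have key : ∀ (s : Finset X), (∀ x ∈ s, ‖x‖ = 1) → ∀ η : ℝ, 0 < η → η < 2 →
      ∃ y : X, ‖y‖ = 1 ∧ ∀ x ∈ s, 2 - η ≤ ‖x - y‖ := by
    intro s hs η hη hη2
    by_contra hcon
    push_neg at hcon
    obtain ⟨i, hi⟩ := h s.card (fun i => (s.equivFin.symm i : X)) (fun _ => 2 - η)
      (fun i => hs _ (s.equivFin.symm i).2) (fun _ => by show (0:ℝ) < 2 - η; linarith)
      (by
        intro y hy
        rw [mem_sphere_zero_iff_norm] at hy
        obtain ⟨z, hz, hzy⟩ := hcon y hy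
        refine Set.mem_iUnion.2 ⟨s.equivFin ⟨z, hz⟩, ?_⟩
        rw [mem_closedBall, dist_eq_norm]
        simp only [Equiv.symm_apply_apply]
        rw [norm_sub_rev]
        linarith)
    have h1 : (-(s.equivFin.symm i : X)) ∈ sphere (0:X) 1 := by
      rw [mem_sphere_zero_iff_norm, norm_neg]
      exact hs _ (s.equivFin.symm i).2
    have h2 := hi h1
    rw [mem_closedBall, dist_eq_norm] at h2
    have h3 : (-(s.equivFin.symm i : X)) - (s.equivFin.symm i : X)
        = (-2 : ℝ) • (s.equivFin.symm i : X) := by module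
    rw [h3, norm_smul, hs _ (s.equivFin.symm i).2] at h2
    simp at h2
    linarith
  intro E hE ε hε
  haveI := hE
  set ε' := min ε (1/2) with hε'def
  have hε'pos : 0 < ε' := lt_min hε (by norm_num)
  have hε'le : ε' ≤ ε := min_le_left _ _
  have hε'half : ε' ≤ 1/2 := min_le_right _ _
  set δ := ε'/2 with hδdef
  have hδpos : 0 < δ := by positivity
  have hδ2 : δ < 2 := by rw [hδdef]; linarith
  set K : Set X := Subtype.val '' (sphere (0:E) 1) with hKdef
  have hK : IsCompact K := (isCompact_sphere (0:E) 1).image continuous_subtype_val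
  obtain ⟨t, ht⟩ := hK.elim_finite_subcover (fun z : K => ball (z : X) δ)
    (fun z => isOpen_ball) (fun z hz => Set.mem_iUnion.2 ⟨⟨z, hz⟩, mem_ball_self hδpos⟩)
  obtain ⟨y, hy, hyfar⟩ := key (t.image (fun z : K => (z : X)))
    (by
      intro x hx
      simp only [Finset.mem_image] at hx
      obtain ⟨z, _, rfl⟩ := hx
      obtain ⟨w, hw, hwz⟩ := z.2
      rw [mem_sphere_zero_iff_norm] at hw
      rw [← hwz]
      exact hw)
    δ hδpos hδ2
  refine ⟨y, hy, ?_⟩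
  have hfar : ∀ u ∈ K, 2 - ε' ≤ ‖u - y‖ := by
    intro u hu
    obtain ⟨z, hzt, hz⟩ := Set.mem_iUnion₂.1 (ht hu)
    rw [mem_ball, dist_eq_norm] at hz
    have h4 := hyfar (z : X) (Finset.mem_image_of_mem _ hzt)
    have h5 : ‖(z:X) - y‖ ≤ ‖(z:X) - u‖ + ‖u - y‖ := by
      have := norm_add_le ((z:X) - u) (u - y)
      rwa [sub_add_sub_cancel] at this
    rw [show ‖(z:X) - u‖ = ‖u - (z:X)‖ from norm_sub_rev _ _] at h5
    rw [hδdef] at h4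
    linarith
  have scale : ∀ (u : X) (T : ℝ), 0 ≤ T → ‖u‖ = 1 → 2 - ε' ≤ ‖u - y‖ →
      (1 - ε') * (T + 1) ≤ ‖T • u - y‖ := by
    intro u T hT hu hufar
    rcases le_total T 1 with hle | hge
    · have h5 : ‖u - T • u‖ = 1 - T := by
        rw [show u - T • u = (1 - T) • u by module, norm_smul, hu, mul_one,
          Real.norm_eq_abs, abs_of_nonneg (by linarith)]
      have h6 : ‖u - y‖ ≤ ‖u - T • u‖ + ‖T • u - y‖ := by
        have := norm_add_le (u - T • u) (T • u - y)
        rwa [sub_add_sub_cancel] at this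
      nlinarith [mul_nonneg hε'pos.le hT]
    · have h6 : T * ‖u - y‖ ≤ ‖T • u - y‖ + (T - 1) := by
        have h7 : T • (u - y) = (T • u - y) + (1 - T) • y := by module
        have h8 := norm_add_le (T • u - y) ((1 - T) • y)
        rw [← h7] at h8
        rw [norm_smul, Real.norm_eq_abs, abs_of_nonneg hT] at h8
        rw [norm_smul, Real.norm_eq_abs, abs_of_nonpos (by linarith : 1 - T ≤ 0), hy,
          mul_one] at h8
        linarith
      nlinarith [mul_le_mul_of_nonneg_left hufar hT, mul_nonneg hε'pos.le hT]
  intro x hxE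
  rcases eq_or_ne x 0 with rfl | hx0
  · simp only [norm_zero, zero_add, zero_sub, norm_neg, hy, mul_one]
    linarith
  · have hxn : 0 < ‖x‖ := norm_pos_iff.2 hx0
    have hun : ‖(‖x‖⁻¹ • x)‖ = 1 := by
      rw [norm_smul, norm_inv, norm_norm, inv_mul_cancel₀ hxn.ne']
    have huE : ‖x‖⁻¹ • x ∈ E := E.smul_mem _ hxE
    have huK : ‖x‖⁻¹ • x ∈ K := by
      refine ⟨⟨‖x‖⁻¹ • x, huE⟩, ?_, rfl⟩
      rw [mem_sphere_zero_iff_norm]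
      exact hun
    have hufar := hfar _ huK
    have hxu : x = ‖x‖ • (‖x‖⁻¹ • x) := by rw [smul_inv_smul₀ hxn.ne']
    calc (1 - ε) * (‖x‖ + ‖y‖) ≤ (1 - ε') * (‖x‖ + ‖y‖) :=
          mul_le_mul_of_nonneg_right (by linarith) (by positivity)
      _ = (1 - ε') * (‖x‖ + 1) := by rw [hy]
      _ ≤ ‖‖x‖ • (‖x‖⁻¹ • x) - y‖ := scale _ ‖x‖ (norm_nonneg x) hun hufar
      _ = ‖x - y‖ := by rw [← hxu]
end

section
/- In an infinite-dimensional Banach space X, any finite covering of the unit sphere S_X by closed balls also covers the entire closed unit ball B_X. -/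
open Metric

theorem stmt5 {X : Type*} [NormedAddCommGroup X] [NormedSpace ℝ X] [CompleteSpace X]
    (hinf : ¬ FiniteDimensional ℝ X)
    (n : ℕ) (x : Fin n → X) (r : Fin n → ℝ) (hr : ∀ i, 0 < r i)
    (hcov : sphere (0 : X) 1 ⊆ ⋃ i, closedBall (x i) (r i)) :
    closedBall (0 : X) 1 ⊆ ⋃ i, closedBall (x i) (r i) := by
  intro y hy
  by_contra hyn
  simp only [Set.mem_iUnion, mem_closedBall, dist_eq_norm, not_exists, not_le] at hyn
  have hy1 : ‖y‖ ≤ 1 := by simpa [dist_eq_norm] using hy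
  -- dual vectors
  have hne : ∀ i, y - x i ≠ 0 := by
    intro i h
    have := hyn i
    rw [h] at this
    simp at this
    exact absurd this (not_lt.mpr (hr i).le)
  choose f hf1 hf2 using fun i => exists_dual_vector ℝ (y - x i) (norm_ne_zero_iff.mpr (hne i))
  -- common kernel direction
  have : ∃ z : X, z ≠ 0 ∧ ∀ i, f i z = 0 := by
    by_contra h
    push_neg at h
    have hinj : Function.Injective
        (LinearMap.pi (fun i => (f i : X →ₗ[ℝ] ℝ)) : X →ₗ[ℝ] (Fin n → ℝ)) := by
      rw [← LinearMap.ker_eq_bot, LinearMap.ker_eq_bot']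
      intro z hz
      by_contra hz0
      obtain ⟨i, hi⟩ := h z hz0
      exact hi (congrFun hz i)
    exact hinf (FiniteDimensional.of_injective _ hinj)
  obtain ⟨z, hz0, hz⟩ := this
  have hznorm : 0 < ‖z‖ := norm_pos_iff.mpr hz0
  -- find t with ‖y + t z‖ = 1
  set g : ℝ → ℝ := fun t => ‖y + t • z‖ with hg
  have hgc : Continuous g := by continuity
  set T : ℝ := (1 + ‖y‖) / ‖z‖ with hT
  have hT0 : 0 ≤ T := div_nonneg (by positivity) hznorm.le
  have hgT : 1 ≤ g T := by
    have hsub : ‖T • z‖ ≤ ‖y + T • z‖ + ‖y‖ := by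
      have h := norm_sub_le (y + T • z) y
      rwa [add_sub_cancel_left] at h
    have hTz : ‖T • z‖ = 1 + ‖y‖ := by
      rw [norm_smul, Real.norm_eq_abs, abs_of_nonneg hT0, hT, div_mul_cancel₀ _ hznorm.ne']
    linarith
  have h1 : (1 : ℝ) ∈ Set.Icc (g 0) (g T) := by
    constructor
    · simpa [hg] using hy1
    · exact hgT
  obtain ⟨t, _, ht⟩ := intermediate_value_Icc hT0 hgc.continuousOn h1
  -- the point y + t z is on the sphere
  have hsphere : y + t • z ∈ sphere (0 : X) 1 := by
    simpa [mem_sphere_iff_norm] using ht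
  obtain ⟨s, ⟨i, rfl⟩, hs⟩ := hcov hsphere
  rw [mem_closedBall, dist_eq_norm] at hs
  -- contradiction via f i
  have hfy : (f i) y - (f i) (x i) = ‖y - x i‖ := by
    have h := hf2 i
    rw [map_sub] at h
    exact_mod_cast h
  have h1' : (f i) (y + t • z) - (f i) (x i) = ‖y - x i‖ := by
    rw [map_add, map_smul, hz i, smul_zero, add_zero]
    exact hfy
  have h2' : (f i) (y + t • z) - (f i) (x i) ≤ r i := by
    calc (f i) (y + t • z) - (f i) (x i) = (f i) (y + t • z - x i) := by rw [map_sub]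
    _ ≤ ‖f i‖ * ‖y + t • z - x i‖ :=
        le_trans (le_abs_self _) (by simpa [Real.norm_eq_abs] using (f i).le_opNorm (y + t • z - x i))
    _ ≤ 1 * r i := by
        apply mul_le_mul (le_of_eq (hf1 i)) hs (norm_nonneg _)
        norm_num
    _ = r i := one_mul _
  have := hyn i
  linarith [h1' ▸ h2']
end

section
/- For fixed unit vectors x₁ ∈ S_X and y₁ ∈ S_Y, every point (x,y) of the unit sphere of X ⊕_p Y (1 < p < ∞) satisfies min{‖(x₁,0) - (x,y)‖_p, ‖(0,y₁) - (x,y)‖_p} ≤ (((2^{1/p}+1)^p + 1)/2)^{1/p}; hence the unit sphere of X ⊕_p Y is covered by the two closed balls of this radius centered at (x₁,0) and (0,y₁). -/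
open Metric Real

private lemma mono_aux {p : ℝ} (hp : 1 < p) :
    MonotoneOn (fun s : ℝ => (1 + s) ^ p - s ^ p) (Set.Ici 0) := by
  have hderiv : ∀ s : ℝ, HasDerivAt (fun s : ℝ => (1 + s) ^ p - s ^ p)
      (p * (1 + s) ^ (p - 1) - p * s ^ (p - 1)) s := by
    intro s
    have h1 : HasDerivAt (fun s : ℝ => (1 + s) ^ p) (p * (1 + s) ^ (p - 1) * 1) s := by
      have := (Real.hasDerivAt_rpow_const (x := 1 + s) (p := p) (Or.inr hp.le))
      exact HasDerivAt.comp s (by simpa using this) ((hasDerivAt_id s).const_add 1)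
    have h2 : HasDerivAt (fun s : ℝ => s ^ p) (p * s ^ (p - 1)) s := by
      simpa using Real.hasDerivAt_rpow_const (x := s) (p := p) (Or.inr hp.le)
    simpa [mul_one, Pi.sub_def] using h1.sub h2
  apply monotoneOn_of_deriv_nonneg (convex_Ici 0)
  · exact Continuous.continuousOn (((continuous_const.add continuous_id).rpow_const (fun x => Or.inr (by linarith))).sub (continuous_id.rpow_const (fun x => Or.inr (by linarith))))
  · intro s hs
    exact (hderiv s).differentiableAt.differentiableWithinAt
  · intro s hs
    rw [interior_Ici] at hs
    rw [(hderiv s).deriv]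
    have : s ^ (p - 1) ≤ (1 + s) ^ (p - 1) :=
      Real.rpow_le_rpow (le_of_lt hs) (by linarith) (by linarith)
    nlinarith [Real.rpow_nonneg (le_of_lt hs) (p-1)]

private lemma key_ineq {p : ℝ} (hp : 1 < p) {a b : ℝ} (ha : 0 ≤ a) (hb : 0 ≤ b)
    (hab : a ^ p + b ^ p = 1) (ha2 : a ^ p ≤ 1 / 2) :
    (1 + a) ^ p + b ^ p ≤ (((2 : ℝ) ^ (1 / p) + 1) ^ p + 1) / 2 := by
  have hp0 : (0:ℝ) < p := by linarith
  set c : ℝ := ((1:ℝ)/2) ^ (1/p) with hc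
  have hc0 : 0 ≤ c := Real.rpow_nonneg (by norm_num) _
  have hcp : c ^ p = 1 / 2 := by
    rw [hc, ← Real.rpow_mul (by norm_num), div_mul_cancel₀ 1 hp0.ne', Real.rpow_one]
  have hac : a ≤ c := by
    have : a ^ p ≤ c ^ p := by rw [hcp]; exact ha2
    exact (Real.rpow_le_rpow_iff ha hc0 hp0).mp this
  have hmono := mono_aux hp (Set.mem_Ici.mpr ha) (Set.mem_Ici.mpr hc0) hac
  simp only at hmono
  have h1c : 1 + c = ((2:ℝ) ^ (1/p) + 1) * c := by
    have : (2:ℝ) ^ (1/p) * c = 1 := by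
      rw [hc, ← Real.mul_rpow (by norm_num) (by norm_num)]
      norm_num
    nlinarith [this]
  have h2 : (1 + c) ^ p = ((2:ℝ) ^ (1/p) + 1) ^ p * (1/2) := by
    rw [h1c, Real.mul_rpow (by positivity) hc0, hcp]
  have hb2 : b ^ p = 1 - a ^ p := by linarith
  have := hmono
  rw [h2] at this
  linarith

theorem stmt8 {X Y : Type*} [NormedAddCommGroup X] [NormedSpace ℝ X]
    [NormedAddCommGroup Y] [NormedSpace ℝ Y]
    (p : ℝ) (hp : 1 < p) [Fact (1 ≤ ENNReal.ofReal p)]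
    (x₁ : X) (hx₁ : ‖x₁‖ = 1) (y₁ : Y) (hy₁ : ‖y₁‖ = 1) :
    (∀ z : WithLp (ENNReal.ofReal p) (X × Y), ‖z‖ = 1 →
      min ‖(WithLp.equiv (ENNReal.ofReal p) (X × Y)).symm (x₁, 0) - z‖
          ‖(WithLp.equiv (ENNReal.ofReal p) (X × Y)).symm (0, y₁) - z‖ ≤
        ((((2 : ℝ) ^ (1 / p) + 1) ^ p + 1) / 2) ^ (1 / p)) ∧
    sphere (0 : WithLp (ENNReal.ofReal p) (X × Y)) 1 ⊆
      closedBall ((WithLp.equiv (ENNReal.ofReal p) (X × Y)).symm (x₁, 0))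
          (((((2 : ℝ) ^ (1 / p) + 1) ^ p + 1) / 2) ^ (1 / p)) ∪
      closedBall ((WithLp.equiv (ENNReal.ofReal p) (X × Y)).symm (0, y₁))
          (((((2 : ℝ) ^ (1 / p) + 1) ^ p + 1) / 2) ^ (1 / p)) := by
  have hp0 : (0:ℝ) < p := by linarith
  have htR : (ENNReal.ofReal p).toReal = p := ENNReal.toReal_ofReal hp0.le
  have htpos : 0 < (ENNReal.ofReal p).toReal := by rw [htR]; exact hp0
  set r : ℝ := ((((2 : ℝ) ^ (1 / p) + 1) ^ p + 1) / 2) with hr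
  have hr0 : 0 ≤ r := by positivity
  have main : ∀ z : WithLp (ENNReal.ofReal p) (X × Y), ‖z‖ = 1 →
      min ‖(WithLp.equiv (ENNReal.ofReal p) (X × Y)).symm (x₁, 0) - z‖
          ‖(WithLp.equiv (ENNReal.ofReal p) (X × Y)).symm (0, y₁) - z‖ ≤ r ^ (1/p) := by
    intro z hz
    set a := ‖z.fst‖ with hadef
    set b := ‖z.snd‖ with hbdef
    have ha : 0 ≤ a := norm_nonneg _
    have hb : 0 ≤ b := norm_nonneg _
    have hsum : a ^ p + b ^ p = 1 := by
      have h1 : (a ^ p + b ^ p) ^ (1/p) = 1 := by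
        have := WithLp.prod_norm_eq_add htpos z
        rw [htR] at this
        rw [← this]; exact hz
      have h2 : ((a ^ p + b ^ p) ^ (1/p)) ^ p = 1 := by rw [h1, Real.one_rpow]
      rwa [← Real.rpow_mul (by positivity), div_mul_cancel₀ 1 hp0.ne', Real.rpow_one] at h2
    have hkey : ∀ w : WithLp (ENNReal.ofReal p) (X × Y),
        ‖w‖ = (‖w.fst‖ ^ p + ‖w.snd‖ ^ p) ^ (1/p) := by
      intro w; rw [WithLp.prod_norm_eq_add htpos w, htR]
    have hd1 : ‖(WithLp.equiv (ENNReal.ofReal p) (X × Y)).symm (x₁, 0) - z‖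
        = (‖x₁ - z.fst‖ ^ p + b ^ p) ^ (1/p) := by
      have e1 : ((WithLp.equiv (ENNReal.ofReal p) (X × Y)).symm (x₁, 0) - z).fst = x₁ - z.fst := by
        rw [WithLp.sub_fst, WithLp.equiv_symm_apply, WithLp.toLp_fst]
      have e2 : ((WithLp.equiv (ENNReal.ofReal p) (X × Y)).symm (x₁, 0) - z).snd = 0 - z.snd := by
        rw [WithLp.sub_snd, WithLp.equiv_symm_apply, WithLp.toLp_snd]
      rw [hkey, e1, e2, zero_sub, norm_neg]
    have hd2 : ‖(WithLp.equiv (ENNReal.ofReal p) (X × Y)).symm (0, y₁) - z‖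
        = (a ^ p + ‖y₁ - z.snd‖ ^ p) ^ (1/p) := by
      have e1 : ((WithLp.equiv (ENNReal.ofReal p) (X × Y)).symm (0, y₁) - z).fst = 0 - z.fst := by
        rw [WithLp.sub_fst, WithLp.equiv_symm_apply, WithLp.toLp_fst]
      have e2 : ((WithLp.equiv (ENNReal.ofReal p) (X × Y)).symm (0, y₁) - z).snd = y₁ - z.snd := by
        rw [WithLp.sub_snd, WithLp.equiv_symm_apply, WithLp.toLp_snd]
      rw [hkey, e1, e2, zero_sub, norm_neg]
    rcases le_total (a ^ p) (b ^ p) with hle | hle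
    · refine le_trans (min_le_left _ _) ?_
      rw [hd1]
      apply Real.rpow_le_rpow (by positivity) ?_ (by positivity)
      have h1 : ‖x₁ - z.fst‖ ^ p ≤ (1 + a) ^ p := by
        apply Real.rpow_le_rpow (norm_nonneg _) ?_ hp0.le
        calc ‖x₁ - z.fst‖ ≤ ‖x₁‖ + ‖z.fst‖ := norm_sub_le _ _
          _ = 1 + a := by rw [hx₁]
      have h2 := key_ineq hp ha hb hsum (by linarith)
      linarith
    · refine le_trans (min_le_right _ _) ?_
      rw [hd2]
      apply Real.rpow_le_rpow (by positivity) ?_ (by positivity)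
      have h1 : ‖y₁ - z.snd‖ ^ p ≤ (1 + b) ^ p := by
        apply Real.rpow_le_rpow (norm_nonneg _) ?_ hp0.le
        calc ‖y₁ - z.snd‖ ≤ ‖y₁‖ + ‖z.snd‖ := norm_sub_le _ _
          _ = 1 + b := by rw [hy₁]
      have h2 := key_ineq hp hb ha (by linarith) (by linarith)
      linarith
  refine ⟨main, ?_⟩
  intro z hz
  have hz1 : ‖z‖ = 1 := by simpa using mem_sphere_iff_norm.mp hz
  have := main z hz1
  rcases min_le_iff.mp this with h | h
  · left
    rw [mem_closedBall, dist_eq_norm, ← norm_neg, neg_sub]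
    exact h
  · right
    rw [mem_closedBall, dist_eq_norm, ← norm_neg, neg_sub]
    exact h
end

section
/- If X and Y are nonzero Banach spaces and 1 < p < ∞, then the norm on X ⊕_p Y is never octahedral. -/
open Metric

/-- `t ↦ (1+t)^p - t^p` is monotone on nonnegatives, by convexity of `x ↦ x^p`. -/
lemma shift_mono {p a b : ℝ} (hp : 1 ≤ p) (ha : 0 ≤ a) (hab : a ≤ b) :
    (1 + a) ^ p - a ^ p ≤ (1 + b) ^ p - b ^ p := by
  rcases eq_or_lt_of_le hab with rfl | hlt
  · exact le_refl _
  set f : ℝ → ℝ := fun x => x ^ p with hf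
  have hconv := convexOn_rpow hp
  have hd : (0:ℝ) < b + 1 - a := by linarith
  set lam : ℝ := (b - a) / (b + 1 - a) with hlam
  set mu : ℝ := 1 / (b + 1 - a) with hmu
  have hlam0 : 0 ≤ lam := div_nonneg (by linarith) hd.le
  have hmu0 : 0 ≤ mu := div_nonneg (by norm_num) hd.le
  have hsum : lam + mu = 1 := by
    rw [hlam, hmu, ← add_div, div_eq_one_iff_eq hd.ne']
    ring
  have hsum' : mu + lam = 1 := by linarith
  have hb1 : (0:ℝ) ≤ b + 1 := by linarith
  have h1 : f (lam • a + mu • (b + 1)) ≤ lam • f a + mu • f (b + 1) :=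
    hconv.2 (Set.mem_Ici.2 ha) (Set.mem_Ici.2 hb1) hlam0 hmu0 hsum
  have h2 : f (mu • a + lam • (b + 1)) ≤ mu • f a + lam • f (b + 1) :=
    hconv.2 (Set.mem_Ici.2 ha) (Set.mem_Ici.2 hb1) hmu0 hlam0 hsum'
  have e1 : lam • a + mu • (b + 1) = 1 + a := by
    simp only [smul_eq_mul, hlam, hmu]
    field_simp
    ring
  have e2 : mu • a + lam • (b + 1) = b := by
    simp only [smul_eq_mul, hlam, hmu]
    field_simp
    ring
  rw [e1] at h1
  rw [e2] at h2
  have hadd := add_le_add h1 h2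
  simp only [smul_eq_mul] at hadd
  have hcomb : lam * f a + mu * f (b + 1) + (mu * f a + lam * f (b + 1))
      = (lam + mu) * (f a + f (b + 1)) := by ring
  rw [hsum, one_mul] at hcomb
  rw [hcomb] at hadd
  simp only [hf] at hadd
  have hba : b + (1:ℝ) = 1 + b := add_comm b 1
  rw [hba] at hadd
  linarith

/-- The key strict inequality: `(1 + 2^(-1/p))^p + 1/2 < 2^p` for `p > 1`. -/
lemma key_ineq_s9 {p : ℝ} (hp : 1 < p) :
    (1 + (2:ℝ) ^ (-(1/p))) ^ p + 1/2 < 2 ^ p := by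
  have hp0 : (0:ℝ) < p := by linarith
  set c : ℝ := (2:ℝ) ^ (-(1/p)) with hc
  have hc0 : 0 < c := Real.rpow_pos_of_pos (by norm_num) _
  -- c < 1 - 1/(2p) by strict convexity of exp
  have hcexp : c = Real.exp ((1 - 1/p) • 0 + (1/p) • (-Real.log 2)) := by
    rw [hc, Real.rpow_def_of_pos (by norm_num : (0:ℝ) < 2)]
    congr 1
    simp [smul_eq_mul]
    ring
  have hclt : c < 1 - 1/(2*p) := by
    have hne : (0:ℝ) ≠ -Real.log 2 := by
      have : 0 < Real.log 2 := Real.log_pos (by norm_num)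
      linarith
    have ha : (0:ℝ) < 1 - 1/p := by
      rw [sub_pos]
      rw [div_lt_one hp0]
      exact hp
    have hb : (0:ℝ) < 1/p := by positivity
    have habs : (1 - 1/p) + 1/p = 1 := by ring
    have := strictConvexOn_exp.2 (Set.mem_univ (0:ℝ))
      (Set.mem_univ (-Real.log 2)) hne ha hb habs
    rw [← hcexp] at this
    have he0 : Real.exp 0 = 1 := Real.exp_zero
    have he2 : Real.exp (-Real.log 2) = 1/2 := by
      rw [Real.exp_neg, Real.exp_log (by norm_num : (0:ℝ) < 2)]
      norm_num
    rw [he0, he2] at this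
    simp only [smul_eq_mul] at this
    have : c < (1 - 1/p) * 1 + (1/p) * (1/2) := this
    have heq : (1 - 1/p) * 1 + (1/p) * (1/2) = 1 - 1/(2*p) := by
      field_simp
      ring
    linarith [heq ▸ this]
  -- Bernoulli step
  set z : ℝ := (1 - c) / (1 + c) with hz
  have hc1 : c < 1 := by
    have : 1/(2*p) > 0 := by positivity
    linarith
  have hz0 : 0 ≤ z := by
    apply div_nonneg <;> linarith
  have hbern : 1 + p * z ≤ (1 + z) ^ p := one_add_mul_self_le_rpow_one_add (by linarith) hp.le
  have hprod : (1 + c) * (1 + z) = 2 := by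
    rw [hz]
    field_simp
    ring
  have h2p : (2:ℝ) ^ p = (1 + c) ^ p * (1 + z) ^ p := by
    rw [← Real.mul_rpow (by linarith) (by linarith), hprod]
  have hcp1 : (1:ℝ) + c ≤ (1 + c) ^ p := by
    nth_rewrite 1 [← Real.rpow_one (1 + c)]
    exact Real.rpow_le_rpow_of_exponent_le (by linarith) hp.le
  have hcp0 : (0:ℝ) < (1 + c) ^ p := Real.rpow_pos_of_pos (by linarith) _
  have step1 : (1 + c) ^ p * (1 + p * z) ≤ 2 ^ p := by
    rw [h2p]
    exact mul_le_mul_of_nonneg_left hbern hcp0.le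
  have step2 : (1 + c) ^ p + p * (1 - c) ≤ (1 + c) ^ p * (1 + p * z) := by
    have hz1 : z * (1 + c) = 1 - c := by
      rw [hz]; field_simp
    have : p * (1 - c) = p * (z * (1 + c)) := by rw [hz1]
    rw [this]
    have : p * (z * (1 + c)) ≤ p * (z * (1 + c) ^ p) := by
      apply mul_le_mul_of_nonneg_left _ hp0.le
      exact mul_le_mul_of_nonneg_left hcp1 hz0
    nlinarith [this]
  have step3 : 1/2 < p * (1 - c) := by
    have h1 : 1/(2*p) < 1 - c := by linarith
    have := mul_lt_mul_of_pos_left h1 hp0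
    have hpe : p * (1/(2*p)) = 1/2 := by field_simp
    linarith [hpe ▸ this]
  linarith

/-- Arithmetic contradiction lemma. -/
lemma aux_contra {p α β T c : ℝ} (hp : 1 < p) (hβα : β ^ p ≤ α ^ p)
    (hsum : α ^ p + β ^ p = 1) (hβ : 0 ≤ β) (hcp : c ^ p = 1/2) (hc0 : 0 ≤ c)
    (hT : (1 + c) ^ p + 1/2 < T ^ p) (hle : T ^ p ≤ α ^ p + (1 + β) ^ p) : False := by
  have hp0 : (0:ℝ) < p := by linarith
  have hβp : β ^ p ≤ 1/2 := by linarith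
  have hβc : β ≤ c := by
    by_contra h
    push_neg at h
    have := Real.rpow_lt_rpow hc0 h hp0
    rw [hcp] at this
    linarith
  have hmono := shift_mono hp.le hβ hβc
  -- α^p = 1 - β^p
  have hα : α ^ p = 1 - β ^ p := by linarith
  rw [hα] at hle
  -- 1 - β^p + (1+β)^p ≤ 1 - c^p + (1+c)^p = 1/2 + (1+c)^p
  rw [hcp] at hmono
  linarith

theorem stmt9 {X Y : Type*} [NormedAddCommGroup X] [NormedSpace ℝ X] [CompleteSpace X]
    [Nontrivial X] [NormedAddCommGroup Y] [NormedSpace ℝ Y] [CompleteSpace Y] [Nontrivial Y]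
    (p : ℝ) (hp : 1 < p) [Fact (1 ≤ ENNReal.ofReal p)] :
    ¬ Octahedral (WithLp (ENNReal.ofReal p) (X × Y)) := by
  intro hoct
  have hp0 : (0:ℝ) < p := by linarith
  set P := ENNReal.ofReal p with hP
  have hPt : P.toReal = p := ENNReal.toReal_ofReal hp0.le
  -- unit vectors
  obtain ⟨x₀, hx₀⟩ : ∃ x : X, x ≠ 0 := exists_ne 0
  obtain ⟨y₀, hy₀⟩ : ∃ y : Y, y ≠ 0 := exists_ne 0
  set x₁ : X := (‖x₀‖⁻¹ : ℝ) • x₀ with hx₁def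
  set y₁ : Y := (‖y₀‖⁻¹ : ℝ) • y₀ with hy₁def
  have hx₁ : ‖x₁‖ = 1 := norm_smul_inv_norm hx₀
  have hy₁ : ‖y₁‖ = 1 := norm_smul_inv_norm hy₀
  set u : WithLp P (X × Y) := (WithLp.equiv P (X × Y)).symm (x₁, 0) with hudef
  set v : WithLp P (X × Y) := (WithLp.equiv P (X × Y)).symm (0, y₁) with hvdef
  have hu : ‖u‖ = 1 := by rw [hudef, WithLp.equiv_symm_apply, WithLp.norm_toLp_fst, hx₁]
  have hv : ‖v‖ = 1 := by rw [hvdef, WithLp.equiv_symm_apply, WithLp.norm_toLp_snd, hy₁]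
  -- constants
  set c : ℝ := (2:ℝ) ^ (-(1/p)) with hcdef
  have hc0 : 0 < c := Real.rpow_pos_of_pos (by norm_num) _
  have hcp : c ^ p = 1/2 := by
    rw [hcdef, ← Real.rpow_mul (by norm_num : (0:ℝ) ≤ 2)]
    have : -(1/p) * p = -1 := by field_simp
    rw [this, Real.rpow_neg_one]
    norm_num
  have hkey := key_ineq_s9 hp
  set Mp : ℝ := (1 + c) ^ p + 1/2 with hMpdef
  have hMp0 : 0 < Mp := by
    have := Real.rpow_pos_of_pos (by linarith : (0:ℝ) < 1 + c) p
    rw [hMpdef]; linarith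
  set M : ℝ := Mp ^ (1/p) with hMdef
  have hM0 : 0 < M := Real.rpow_pos_of_pos hMp0 _
  have hMppow : M ^ p = Mp := by
    rw [hMdef, one_div, Real.rpow_inv_rpow hMp0.le (by positivity)]
  have hM2 : M < 2 := by
    by_contra h
    push_neg at h
    have := Real.rpow_le_rpow (by norm_num : (0:ℝ) ≤ 2) h hp0.le
    rw [hMppow] at this
    linarith
  set ε : ℝ := (2 - M) / 4 with hεdef
  have hε : 0 < ε := by rw [hεdef]; linarith
  -- apply octahedrality
  obtain ⟨y, hy, hyE⟩ := hoct (Submodule.span ℝ {u, v})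
    (FiniteDimensional.span_of_finite ℝ (Set.toFinite _)) ε hε
  have hyu := hyE u (Submodule.subset_span (by simp))
  have hyv := hyE v (Submodule.subset_span (by simp))
  rw [hu, hy] at hyu
  rw [hv, hy] at hyv
  set T : ℝ := (2 + M) / 2 with hTdef
  have hTeq : (1 - ε) * (1 + 1) = T := by rw [hεdef, hTdef]; ring
  rw [hTeq] at hyu hyv
  have hT0 : 0 < T := by rw [hTdef]; linarith
  have hMT : M < T := by rw [hTdef]; linarith
  have hTp : Mp < T ^ p := by
    have := Real.rpow_lt_rpow hM0.le hMT hp0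
    rw [hMppow] at this
    exact this
  -- component norms
  set α : ℝ := ‖y.fst‖ with hαdef
  set β : ℝ := ‖y.snd‖ with hβdef
  have hptpos : 0 < P.toReal := by rw [hPt]; exact hp0
  have hsum : α ^ p + β ^ p = 1 := by
    have h1 : ‖y‖ = (α ^ p + β ^ p) ^ (1/p) := by
      rw [WithLp.prod_norm_eq_add hptpos, hPt]
    rw [hy] at h1
    have h2 : ((α ^ p + β ^ p) ^ (1/p)) ^ p = 1 ^ p := by rw [← h1]
    rw [one_div, Real.rpow_inv_rpow (by positivity) (by positivity), Real.one_rpow] at h2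
    exact h2
  -- norm estimates
  have huy : ‖u - y‖ ^ p ≤ (1 + α) ^ p + β ^ p := by
    have hfst : (u - y).fst = x₁ - y.fst := rfl
    have hsnd : (u - y).snd = 0 - y.snd := rfl
    have h1 : ‖u - y‖ = (‖x₁ - y.fst‖ ^ p + ‖(0:Y) - y.snd‖ ^ p) ^ (1/p) := by
      rw [WithLp.prod_norm_eq_add hptpos, hPt, hfst, hsnd]
    rw [h1, one_div, Real.rpow_inv_rpow (by positivity) (by positivity)]
    have e1 : ‖x₁ - y.fst‖ ≤ 1 + α := by
      calc ‖x₁ - y.fst‖ ≤ ‖x₁‖ + ‖y.fst‖ := norm_sub_le _ _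
        _ = 1 + α := by rw [hx₁, hαdef]
    have e2 : ‖(0:Y) - y.snd‖ = β := by rw [zero_sub, norm_neg, hβdef]
    rw [e2]
    have := Real.rpow_le_rpow (norm_nonneg _) e1 hp0.le
    linarith
  have hvy : ‖v - y‖ ^ p ≤ α ^ p + (1 + β) ^ p := by
    have hfst : (v - y).fst = 0 - y.fst := rfl
    have hsnd : (v - y).snd = y₁ - y.snd := rfl
    have h1 : ‖v - y‖ = (‖(0:X) - y.fst‖ ^ p + ‖y₁ - y.snd‖ ^ p) ^ (1/p) := by
      rw [WithLp.prod_norm_eq_add hptpos, hPt, hfst, hsnd]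
    rw [h1, one_div, Real.rpow_inv_rpow (by positivity) (by positivity)]
    have e1 : ‖y₁ - y.snd‖ ≤ 1 + β := by
      calc ‖y₁ - y.snd‖ ≤ ‖y₁‖ + ‖y.snd‖ := norm_sub_le _ _
        _ = 1 + β := by rw [hy₁, hβdef]
    have e2 : ‖(0:X) - y.fst‖ = α := by rw [zero_sub, norm_neg, hαdef]
    rw [e2]
    have := Real.rpow_le_rpow (norm_nonneg _) e1 hp0.le
    linarith
  -- from octahedrality: T ≤ ‖u - y‖ and T ≤ ‖v - y‖, so T^p ≤ the bounds
  have hTu : T ^ p ≤ (1 + α) ^ p + β ^ p :=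
    le_trans (Real.rpow_le_rpow hT0.le hyu hp0.le) huy
  have hTv : T ^ p ≤ α ^ p + (1 + β) ^ p :=
    le_trans (Real.rpow_le_rpow hT0.le hyv hp0.le) hvy
  -- contradiction
  rcases le_total β α with hβα | hαβ
  · exact aux_contra hp (Real.rpow_le_rpow (norm_nonneg _) hβα hp0.le) hsum (norm_nonneg _)
      hcp hc0.le (by rw [← hMpdef]; exact hTp) hTv
  · exact aux_contra hp (Real.rpow_le_rpow (norm_nonneg _) hαβ hp0.le)
      (by linarith) (norm_nonneg _) hcp hc0.le (by rw [← hMpdef]; exact hTp)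
      (by linarith [hTu])
end

section
/- For 1 < p < ∞, ((2^{1/p} + 1)^p + 1)/2 < 2^p. -/
theorem stmt10 (p : ℝ) (hp : 1 < p) :
    (((2 : ℝ) ^ (1 / p) + 1) ^ p + 1) / 2 < 2 ^ p := by
  have hp0 : (0 : ℝ) < p := by linarith
  set t : ℝ := (2 : ℝ) ^ (1 / p) with ht
  have ht1 : 1 < t := Real.one_lt_rpow_iff_of_pos (by norm_num) |>.2 (Or.inl ⟨by norm_num, by positivity⟩)
  have ht0 : (0 : ℝ) ≤ t := by linarith
  have htp : t ^ p = 2 := by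
    rw [ht, ← Real.rpow_mul (by norm_num), one_div_mul_cancel hp0.ne', Real.rpow_one]
  have hconv := strictConvexOn_rpow hp |>.2 (Set.mem_Ici.2 ht0)
    (Set.mem_Ici.2 (by norm_num : (0:ℝ) ≤ 1)) ht1.ne' (by norm_num : (0:ℝ) < 1/2)
    (by norm_num : (0:ℝ) < 1/2) (by norm_num)
  simp only [smul_eq_mul, mul_one, Real.one_rpow, htp] at hconv
  -- hconv : (1/2 * t + 1/2) ^ p < 1/2 * 2 + 1/2
  have hhalf : ((t + 1)/2) ^ p < 3/2 := by
    have : (1/2 * t + 1/2 : ℝ) = (t+1)/2 := by ring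
    rw [this] at hconv
    linarith
  have hexp : (t + 1) ^ p = ((t+1)/2) ^ p * 2 ^ p := by
    rw [← Real.mul_rpow (by linarith) (by norm_num)]
    ring_nf
  have h2p : (2:ℝ) < 2 ^ p := by
    calc (2:ℝ) = 2 ^ (1:ℝ) := by norm_num
    _ < 2 ^ p := Real.rpow_lt_rpow_left_iff (by norm_num) |>.2 hp
  have hpos : (0:ℝ) < 2 ^ p := by positivity
  nlinarith [hhalf, hexp]
end

section
/- If the norm on a Banach space X is locally octahedral and S_X ⊆ B(x,r) ∪ B(-x,r) for some x ∈ X and r > 0, then S_X ⊆ B(x,r) (equivalently r ≥ ‖x‖ + 1). -/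
open Metric

def LocallyOctahedral (X : Type*) [NormedAddCommGroup X] [NormedSpace ℝ X] : Prop :=
  ∀ x : X, ∀ ε : ℝ, 0 < ε →
    ∃ y : X, ‖y‖ = 1 ∧ ∀ s : ℝ, (1 - ε) * (|s| * ‖x‖ + ‖y‖) ≤ ‖s • x - y‖

theorem stmt12 {X : Type*} [NormedAddCommGroup X] [NormedSpace ℝ X] [CompleteSpace X]
    (hloh : LocallyOctahedral X) (x : X) (r : ℝ) (hr : 0 < r)
    (hcov : sphere (0 : X) 1 ⊆ closedBall x r ∪ closedBall (-x) r) :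
    sphere (0 : X) 1 ⊆ closedBall x r ∧ ‖x‖ + 1 ≤ r := by
  have key : ∀ ε : ℝ, 0 < ε → (1 - ε) * (‖x‖ + 1) ≤ r := by
    intro ε hε
    obtain ⟨y, hy1, hy⟩ := hloh x ε hε
    have hys : y ∈ sphere (0 : X) 1 := by simp [hy1]
    rcases hcov hys with h | h
    · have h1 := hy 1
      simp only [abs_one, one_mul, one_smul, hy1] at h1
      have : ‖x - y‖ ≤ r := by
        rw [mem_closedBall, dist_eq_norm] at h
        rw [← norm_neg]; simpa using h
      linarith [h1, this]
    · have h1 := hy (-1)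
      simp only [abs_neg, abs_one, one_mul, neg_one_smul, hy1] at h1
      have : ‖-x - y‖ ≤ r := by
        rw [mem_closedBall, dist_eq_norm] at h
        rw [← norm_neg]; simpa [sub_eq_add_neg, add_comm] using h
      linarith [h1, this]
  have ha : (0:ℝ) < ‖x‖ + 1 := by positivity
  have hmain : ‖x‖ + 1 ≤ r := by
    refine le_of_forall_pos_le_add ?_
    intro δ hδ
    have h := key (δ / (‖x‖ + 1)) (by positivity)
    have : ‖x‖ + 1 - δ ≤ r := by
      have : (1 - δ / (‖x‖ + 1)) * (‖x‖ + 1) = ‖x‖ + 1 - δ := by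
        field_simp
      linarith [h, this.symm ▸ h]
    linarith
  refine ⟨?_, hmain⟩
  intro z hz
  rw [mem_sphere_zero_iff_norm] at hz
  rw [mem_closedBall, dist_eq_norm]
  calc ‖z - x‖ ≤ ‖z‖ + ‖x‖ := norm_sub_le _ _
    _ = ‖x‖ + 1 := by rw [hz]; ring
    _ ≤ r := hmain
end

section
/- Suppose X is a Banach space such that whenever S_X ⊆ B(x,r) ∪ B(-x,r) for some x ∈ S_X and r > 0, one has S_X ⊆ B(x,r). Then the norm on X is locally octahedral. -/
open Metric

lemma aux13 {X : Type*} [NormedAddCommGroup X] [NormedSpace ℝ X] {u y : X} {ε t : ℝ}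
    (hu : ‖u‖ = 1) (hy : ‖y‖ = 1) (hε0 : 0 < ε) (hε1 : ε < 1) (ht : 0 < t)
    (hlt : ‖t • u - y‖ < (1 - ε) * (t + 1)) : ‖u - y‖ ≤ 2 - ε ^ 2 / (2 - ε) := by
  have h2ε : 0 < 2 - ε := by linarith
  have hkey : ε ^ 2 / (2 - ε) ≤ ε := by
    rw [div_le_iff₀ h2ε]; nlinarith
  rcases le_or_gt t 1 with h1 | h1
  · have tri : ‖u - y‖ ≤ ‖u - t • u‖ + ‖t • u - y‖ := by
      have : u - y = (u - t • u) + (t • u - y) := by abel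
      rw [this]; exact norm_add_le _ _
    have h2 : ‖u - t • u‖ = 1 - t := by
      have : u - t • u = (1 - t) • u := by
        rw [sub_smul, one_smul]
      rw [this, norm_smul, hu, mul_one, Real.norm_eq_abs, abs_of_nonneg (by linarith)]
    have hεt : ε ^ 2 / (2 - ε) ≤ ε + ε * t := by
      rw [div_le_iff₀ h2ε]
      nlinarith [mul_pos hε0 (sub_pos.2 hε1), mul_pos (mul_pos hε0 ht) h2ε]
    linarith [tri, h2, hlt]
  · have ht' : (0:ℝ) < t := ht
    have tri : ‖u - y‖ ≤ ‖u - t⁻¹ • y‖ + ‖t⁻¹ • y - y‖ := by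
      have : u - y = (u - t⁻¹ • y) + (t⁻¹ • y - y) := by abel
      rw [this]; exact norm_add_le _ _
    have h2 : ‖u - t⁻¹ • y‖ = t⁻¹ * ‖t • u - y‖ := by
      have : u - t⁻¹ • y = t⁻¹ • (t • u - y) := by
        rw [smul_sub, smul_smul, inv_mul_cancel₀ (ne_of_gt ht'), one_smul]
      rw [this, norm_smul, Real.norm_eq_abs, abs_of_pos (inv_pos.2 ht')]
    have h3 : ‖t⁻¹ • y - y‖ = 1 - t⁻¹ := by
      have : t⁻¹ • y - y = (t⁻¹ - 1) • y := by rw [sub_smul, one_smul]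
      have hti : t⁻¹ ≤ 1 := by
        rw [inv_le_one_iff₀]; right; linarith
      rw [this, norm_smul, hy, mul_one, Real.norm_eq_abs, abs_of_nonpos (by linarith)]
      ring
    have hti : 0 < t⁻¹ := inv_pos.2 ht'
    have h4 : t⁻¹ * ‖t • u - y‖ < t⁻¹ * ((1 - ε) * (t + 1)) :=
      mul_lt_mul_of_pos_left hlt hti
    have h5 : t⁻¹ * ((1 - ε) * (t + 1)) = (1 - ε) * (1 + t⁻¹) := by
      field_simp
    have h6 : t⁻¹ ≤ 1 := by rw [inv_le_one_iff₀]; right; linarith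
    have hεt : ε ^ 2 / (2 - ε) ≤ ε + ε * t⁻¹ := by
      rw [div_le_iff₀ h2ε]
      nlinarith [mul_pos hε0 (sub_pos.2 hε1), mul_pos (mul_pos hε0 hti) h2ε]
    nlinarith [tri, h2, h3, h4, h5]

theorem stmt13 {X : Type*} [NormedAddCommGroup X] [NormedSpace ℝ X] [CompleteSpace X]
    [Nontrivial X]
    (h : ∀ x : X, ‖x‖ = 1 → ∀ r : ℝ, 0 < r →
      sphere (0 : X) 1 ⊆ closedBall x r ∪ closedBall (-x) r →
      sphere (0 : X) 1 ⊆ closedBall x r) :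
    LocallyOctahedral X := by
  intro x ε hε0
  obtain ⟨z, hz⟩ : ∃ z : X, ‖z‖ = 1 := exists_norm_eq X (by norm_num : (0:ℝ) ≤ 1)
  by_cases hε1 : 1 ≤ ε
  · refine ⟨z, hz, fun s => ?_⟩
    have h1 : (1 - ε) ≤ 0 := by linarith
    have h2 : 0 ≤ |s| * ‖x‖ + ‖z‖ := by positivity
    nlinarith [norm_nonneg (s • x - z)]
  push_neg at hε1
  by_cases hx : x = 0
  · subst hx
    refine ⟨z, hz, fun s => ?_⟩
    simp [hz]
    nlinarith [abs_nonneg s]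
  set u := ‖x‖⁻¹ • x with hu_def
  have hu : ‖u‖ = 1 := norm_smul_inv_norm hx
  have key : ∃ y : X, ‖y‖ = 1 ∧ ∀ t : ℝ, (1 - ε) * (|t| + 1) ≤ ‖t • u - y‖ := by
    by_contra hc
    push_neg at hc
    set r := 2 - ε ^ 2 / (2 - ε) with hr_def
    have h2ε : 0 < 2 - ε := by linarith
    have hεr : 0 < ε ^ 2 / (2 - ε) := by positivity
    have hεr1 : ε ^ 2 / (2 - ε) < 2 := by
      rw [div_lt_iff₀ h2ε]; nlinarith
    have hrpos : 0 < r := by rw [hr_def]; linarith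
    have hsub : sphere (0 : X) 1 ⊆ closedBall u r ∪ closedBall (-u) r := by
      intro y hy
      rw [mem_sphere_zero_iff_norm] at hy
      obtain ⟨t, hlt⟩ := hc y hy
      rcases lt_trichotomy t 0 with h0 | h0 | h0
      · right
        rw [mem_closedBall, dist_eq_norm]
        have hnu : ‖(-u : X)‖ = 1 := by rw [norm_neg]; exact hu
        have heq : ‖(-t) • (-u) - y‖ = ‖t • u - y‖ := by
          rw [neg_smul, smul_neg, neg_neg]
        have habs : |t| = -t := abs_of_neg h0
        have := aux13 hnu hy hε0 hε1 (neg_pos.2 h0)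
          (by rw [heq]; rw [habs] at hlt; exact hlt)
        calc ‖y - -u‖ = ‖-u - y‖ := by rw [norm_sub_rev]
          _ ≤ r := this
      · exfalso
        rw [h0] at hlt
        simp [hy] at hlt
        linarith
      · left
        rw [mem_closedBall, dist_eq_norm]
        have habs : |t| = t := abs_of_pos h0
        have := aux13 hu hy hε0 hε1 h0 (by rw [habs] at hlt; exact hlt)
        calc ‖y - u‖ = ‖u - y‖ := by rw [norm_sub_rev]
          _ ≤ r := this
    have hball := h u hu r hrpos hsub
    have hmem : (-u : X) ∈ sphere (0 : X) 1 := by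
      rw [mem_sphere_zero_iff_norm, norm_neg]; exact hu
    have := hball hmem
    rw [mem_closedBall, dist_eq_norm] at this
    have h2 : ‖(-u : X) - u‖ = 2 := by
      have : (-u : X) - u = (-2 : ℝ) • u := by
        rw [neg_smul]
        rw [show ((2:ℝ) • u) = u + u by rw [two_smul]]
        abel
      rw [this, norm_smul, hu, mul_one]
      norm_num
    rw [h2] at this
    rw [hr_def] at this
    linarith
  obtain ⟨y, hy, hkey⟩ := key
  refine ⟨y, hy, fun s => ?_⟩
  have hxpos : 0 < ‖x‖ := norm_pos_iff.2 hx
  have heq : (s * ‖x‖) • u = s • x := by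
    rw [hu_def, smul_smul, mul_assoc, mul_inv_cancel₀ (ne_of_gt hxpos), mul_one]
  have := hkey (s * ‖x‖)
  rw [heq] at this
  rw [abs_mul, abs_of_pos hxpos] at this
  rw [hy]
  linarith
end

section
/- The norm on a Banach space X is locally octahedral if and only if g'(X) = 2, where g'(X) = inf{ε > 0 : S_X ⊆ B(x,ε) ∪ B(-x,ε) for some x ∈ S_X}. -/
open Metric

noncomputable def gprime (X : Type*) [NormedAddCommGroup X] : ℝ :=
  sInf {ε : ℝ | 0 < ε ∧ ∃ x : X, ‖x‖ = 1 ∧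
    sphere (0 : X) 1 ⊆ closedBall x ε ∪ closedBall (-x) ε}

/-- Key estimate: if `‖t • u - y‖ < (1-ε)(t+1)` with `t > 0`, `0 ≤ ε` and `u, y` unit
vectors, then `‖y - u‖ ≤ 2 - ε`. -/
lemma key_est {X : Type*} [NormedAddCommGroup X] [NormedSpace ℝ X]
    {u y : X} {ε t : ℝ} (hu : ‖u‖ = 1) (hy : ‖y‖ = 1) (hε : 0 ≤ ε) (ht : 0 < t)
    (h : ‖t • u - y‖ < (1 - ε) * (t + 1)) : ‖y - u‖ ≤ 2 - ε := by
  rcases le_or_gt t 1 with h1 | h1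
  · have tri : ‖y - u‖ ≤ ‖y - t • u‖ + ‖t • u - u‖ := norm_sub_le_norm_sub_add_norm_sub _ _ _
    have e1 : ‖y - t • u‖ = ‖t • u - y‖ := norm_sub_rev _ _
    have e2 : ‖t • u - u‖ = 1 - t := by
      have h3 : t • u - u = (t - 1) • u := by rw [sub_smul, one_smul]
      rw [h3, norm_smul, hu, Real.norm_eq_abs, abs_of_nonpos (by linarith)]
      ring
    nlinarith [tri, h, ht, mul_nonneg hε ht.le]
  · have htinv : 0 < t⁻¹ := inv_pos.mpr (by linarith)
    have hmul : t * t⁻¹ = 1 := mul_inv_cancel₀ (by linarith)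
    have tri : ‖y - u‖ ≤ ‖y - t⁻¹ • y‖ + ‖t⁻¹ • y - u‖ := norm_sub_le_norm_sub_add_norm_sub _ _ _
    have e1 : ‖y - t⁻¹ • y‖ = 1 - t⁻¹ := by
      have h3 : y - t⁻¹ • y = (1 - t⁻¹) • y := by rw [sub_smul, one_smul]
      have h4 : t⁻¹ ≤ 1 := by
        rw [inv_le_one_iff₀]; right; linarith
      rw [h3, norm_smul, hy, Real.norm_eq_abs, abs_of_nonneg (by linarith)]
      ring
    have e2 : ‖t⁻¹ • y - u‖ = t⁻¹ * ‖t • u - y‖ := by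
      have h3 : t⁻¹ • y - u = t⁻¹ • (y - t • u) := by
        rw [smul_sub, smul_smul, inv_mul_cancel₀ (by linarith), one_smul]
      rw [h3, norm_smul, Real.norm_eq_abs, abs_of_pos htinv, norm_sub_rev]
    have hnn : 0 ≤ ‖t • u - y‖ := norm_nonneg _
    nlinarith [tri, h, mul_nonneg hε htinv.le, mul_lt_mul_of_pos_left h htinv]

theorem stmt14 {X : Type*} [NormedAddCommGroup X] [NormedSpace ℝ X] [CompleteSpace X]
    (hinf : ¬ FiniteDimensional ℝ X) :
    LocallyOctahedral X ↔ gprime X = 2 := by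
  have hNT : Nontrivial X := by
    by_contra h
    rw [not_nontrivial_iff_subsingleton] at h
    exact hinf inferInstance
  obtain ⟨x₀, hx₀⟩ : ∃ x : X, ‖x‖ = 1 := exists_norm_eq X (le_of_lt one_pos)
  constructor
  · -- LOH → gprime = 2
    intro hLOH
    have hset : {ε : ℝ | 0 < ε ∧ ∃ x : X, ‖x‖ = 1 ∧
        sphere (0 : X) 1 ⊆ closedBall x ε ∪ closedBall (-x) ε} = Set.Ici 2 := by
      ext ε
      constructor
      · rintro ⟨hε, x, hx, hcov⟩
        by_contra hlt
        rw [Set.mem_Ici, not_le] at hlt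
        set δ : ℝ := (2 - ε) / 3 with hδdef
        have hδ : 0 < δ := by simp only [hδdef]; linarith
        obtain ⟨y, hy, hby⟩ := hLOH x δ hδ
        have h1 := hby 1
        have h2 := hby (-1)
        rw [abs_one, one_smul, hx, hy] at h1
        rw [abs_neg, abs_one, neg_smul, one_smul, hx, hy] at h2
        have hyx : ‖-x - y‖ = ‖y - -x‖ := norm_sub_rev _ _
        have hymem : y ∈ sphere (0 : X) 1 := by
          rw [mem_sphere_zero_iff_norm]; exact hy
        rcases hcov hymem with hb | hb
        · rw [mem_closedBall, dist_eq_norm, ← norm_sub_rev] at hb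
          have : 2 - 2 * δ > ε := by simp only [hδdef]; linarith
          linarith
        · rw [mem_closedBall, dist_eq_norm, ← hyx] at hb
          have : 2 - 2 * δ > ε := by simp only [hδdef]; linarith
          linarith
      · intro h2
        rw [Set.mem_Ici] at h2
        refine ⟨by linarith, x₀, hx₀, ?_⟩
        intro y hy
        rw [mem_sphere_zero_iff_norm] at hy
        left
        rw [mem_closedBall, dist_eq_norm]
        calc ‖y - x₀‖ ≤ ‖y‖ + ‖x₀‖ := norm_sub_le _ _
        _ = 2 := by rw [hy, hx₀]; norm_num
        _ ≤ ε := h2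
    rw [gprime, hset]
    exact csInf_Ici
  · -- gprime = 2 → LOH
    intro hg
    intro x ε hε
    by_contra hno
    push_neg at hno
    -- hno : ∀ y, ‖y‖ = 1 → ∃ s, ‖s • x - y‖ < (1 - ε) * (|s| * ‖x‖ + ‖y‖)
    have hx0 : x ≠ 0 := by
      intro hx0
      obtain ⟨s, hs⟩ := hno x₀ hx₀
      rw [hx0, smul_zero, zero_sub, norm_neg, hx₀, norm_zero, mul_zero, zero_add,
        mul_one] at hs
      linarith
    set ε' : ℝ := min ε (1/2) with hε'def
    have hε'pos : 0 < ε' := lt_min hε (by norm_num)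
    have hε'le : ε' ≤ ε := min_le_left _ _
    have hε'half : ε' ≤ 1/2 := min_le_right _ _
    set u : X := ‖x‖⁻¹ • x with hudef
    have hu : ‖u‖ = 1 := norm_smul_inv_norm hx0
    have hnx : (0:ℝ) < ‖x‖ := norm_pos_iff.mpr hx0
    -- the covering claim
    have hcov : sphere (0 : X) 1 ⊆ closedBall u (2 - ε') ∪ closedBall (-u) (2 - ε') := by
      intro y hymem
      rw [mem_sphere_zero_iff_norm] at hymem
      obtain ⟨s, hs⟩ := hno y hymem
      rw [hymem] at hs
      set t : ℝ := s * ‖x‖ with htdef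
      have hsx : s • x = t • u := by
        rw [hudef, smul_smul, htdef, mul_assoc, mul_inv_cancel₀ (by linarith), mul_one]
      have habs : |t| = |s| * ‖x‖ := by
        rw [htdef, abs_mul, abs_of_nonneg (norm_nonneg x)]
      have hs' : ‖t • u - y‖ < (1 - ε') * (|t| + 1) := by
        calc ‖t • u - y‖ = ‖s • x - y‖ := by rw [hsx]
        _ < (1 - ε) * (|s| * ‖x‖ + 1) := hs
        _ ≤ (1 - ε') * (|s| * ‖x‖ + 1) := by
            apply mul_le_mul_of_nonneg_right (by linarith)
            positivity
        _ = (1 - ε') * (|t| + 1) := by rw [habs]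
      have ht0 : t ≠ 0 := by
        intro ht0
        rw [ht0, zero_smul, zero_sub, norm_neg, hymem, abs_zero] at hs'
        linarith
      rcases ht0.lt_or_gt with htneg | htpos
      · right
        rw [mem_closedBall, dist_eq_norm, sub_neg_eq_add, ← sub_neg_eq_add]
        have h' : ‖(-t) • (-u) - y‖ < (1 - ε') * (-t + 1) := by
          rw [smul_neg, neg_smul, neg_neg]
          rw [abs_of_neg htneg] at hs'
          exact hs'
        exact key_est (by rw [norm_neg, hu]) hymem hε'pos.le (by linarith) h'
      · left
        rw [mem_closedBall, dist_eq_norm]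
        rw [abs_of_pos htpos] at hs'
        exact key_est hu hymem hε'pos.le htpos hs'
    have hmem : (2 - ε') ∈ {ε : ℝ | 0 < ε ∧ ∃ x : X, ‖x‖ = 1 ∧
        sphere (0 : X) 1 ⊆ closedBall x ε ∪ closedBall (-x) ε} :=
      ⟨by linarith, u, hu, hcov⟩
    have hbdd : BddBelow {ε : ℝ | 0 < ε ∧ ∃ x : X, ‖x‖ = 1 ∧
        sphere (0 : X) 1 ⊆ closedBall x ε ∪ closedBall (-x) ε} :=
      ⟨0, fun a ha => ha.1.le⟩
    have hle : gprime X ≤ 2 - ε' := csInf_le hbdd hmem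
    rw [hg] at hle
    linarith
end

section
/- If the norm on a Banach space X is weakly octahedral, then whenever closed balls B(x₁,r₁),…,B(xₙ,rₙ) cover S_X, for every norm-one functional x* ∈ S_{X*} there exists an index i such that |x*(x - xᵢ)| ≤ rᵢ for all x ∈ S_X. -/
open Metric

def WeaklyOctahedral (X : Type*) [NormedAddCommGroup X] [NormedSpace ℝ X] : Prop :=
  ∀ (E : Submodule ℝ X), FiniteDimensional ℝ E → ∀ f : X →L[ℝ] ℝ, ‖f‖ ≤ 1 →
    ∀ ε : ℝ, 0 < ε →
      ∃ y : X, ‖y‖ = 1 ∧ ∀ x ∈ E, (1 - ε) * (|f x| + ‖y‖) ≤ ‖x - y‖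

theorem stmt15 {X : Type*} [NormedAddCommGroup X] [NormedSpace ℝ X] [CompleteSpace X]
    (hwoh : WeaklyOctahedral X) (n : ℕ) (x : Fin n → X) (r : Fin n → ℝ) (hr : ∀ i, 0 < r i)
    (hcov : sphere (0 : X) 1 ⊆ ⋃ i, closedBall (x i) (r i))
    (f : X →L[ℝ] ℝ) (hf : ‖f‖ = 1) :
    ∃ i, ∀ z ∈ sphere (0 : X) 1, |f (z - x i)| ≤ r i := by
  by_contra h
  push_neg at h
  -- h : ∀ i, ∃ z ∈ sphere 0 1, r i < |f (z - x i)|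
  -- First show Fin n is nonempty using a unit vector from weak octahedrality
  obtain ⟨y0, hy0, -⟩ := hwoh ⊥ inferInstance f hf.le 1 one_pos
  have hy0s : y0 ∈ sphere (0 : X) 1 := by simpa using hy0
  obtain ⟨i0, _⟩ := Set.mem_iUnion.1 (hcov hy0s)
  haveI : Nonempty (Fin n) := ⟨i0⟩
  -- key bound
  have key : ∀ i, r i < 1 + |f (x i)| := by
    intro i
    obtain ⟨z, hz, hrz⟩ := h i
    have hz1 : ‖z‖ = 1 := by simpa using hz
    have h1 : |f (z - x i)| ≤ |f z| + |f (x i)| := by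
      rw [map_sub]; exact abs_sub _ _
    have h2 : |f z| ≤ 1 := by
      calc |f z| ≤ ‖f‖ * ‖z‖ := f.le_opNorm z
        _ = 1 := by rw [hf, hz1, one_mul]
    linarith
  set ε : ℝ := Finset.univ.inf' Finset.univ_nonempty
      (fun i => (1 + |f (x i)| - r i) / (2 * (1 + |f (x i)|))) with hε
  have hden : ∀ i : Fin n, (0:ℝ) < 2 * (1 + |f (x i)|) := by
    intro i; positivity
  have hεpos : 0 < ε := by
    rw [hε]
    apply Finset.lt_inf'_iff .. |>.mpr
    intro i _
    exact div_pos (by linarith [key i]) (hden i)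
  have hεle : ∀ i : Fin n, ε ≤ (1 + |f (x i)| - r i) / (2 * (1 + |f (x i)|)) := by
    intro i
    exact Finset.inf'_le _ (Finset.mem_univ i)
  have hE : FiniteDimensional ℝ (Submodule.span ℝ (Set.range x)) :=
    FiniteDimensional.span_of_finite ℝ (Set.finite_range x)
  obtain ⟨y, hy1, hy⟩ := hwoh (Submodule.span ℝ (Set.range x)) hE f hf.le ε hεpos
  have hys : y ∈ sphere (0 : X) 1 := by simpa using hy1
  obtain ⟨i, hi⟩ := Set.mem_iUnion.1 (hcov hys)
  have hdist : ‖x i - y‖ ≤ r i := by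
    rw [norm_sub_rev]
    simpa [dist_eq_norm] using hi
  have hmem : x i ∈ Submodule.span ℝ (Set.range x) :=
    Submodule.subset_span ⟨i, rfl⟩
  have hineq : (1 - ε) * (|f (x i)| + 1) ≤ r i := by
    have := hy (x i) hmem
    rw [hy1] at this
    linarith
  -- contradiction: ε < (1 + |f (x i)| - r i)/(1 + |f (x i)|)
  have ha : (0:ℝ) < 1 + |f (x i)| := by positivity
  have h3 : ε * (2 * (1 + |f (x i)|)) ≤ 1 + |f (x i)| - r i := by
    have := hεle i
    calc ε * (2 * (1 + |f (x i)|))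
        ≤ ((1 + |f (x i)| - r i) / (2 * (1 + |f (x i)|))) * (2 * (1 + |f (x i)|)) := by
          apply mul_le_mul_of_nonneg_right this (le_of_lt (hden i))
      _ = 1 + |f (x i)| - r i := by field_simp
  nlinarith [key i, hεpos, ha]
end

section
/- For any infinite-dimensional Banach space X, the Whitley thickness constant satisfies 1 ≤ T(X) ≤ 2. -/
open Metric

noncomputable def thickness (X : Type*) [NormedAddCommGroup X] : ℝ :=
  sInf {ε : ℝ | 0 < ε ∧ ∃ s : Finset X, s.Nonempty ∧ (∀ x ∈ s, ‖x‖ = 1) ∧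
    Metric.sphere (0 : X) 1 ⊆ ⋃ x ∈ s, Metric.closedBall x ε}

theorem stmt19 {X : Type*} [NormedAddCommGroup X] [NormedSpace ℝ X] [CompleteSpace X]
    (hinf : ¬ FiniteDimensional ℝ X) :
    1 ≤ thickness X ∧ thickness X ≤ 2 := by
  have hnt : Nontrivial X := by
    by_contra h
    have : Subsingleton X := not_nontrivial_iff_subsingleton.mp h
    exact hinf (Module.finite_of_rank_eq_zero (by simp [rank_subsingleton']))
  obtain ⟨x₀, hx₀⟩ := exists_norm_eq X (le_of_lt one_pos)
  have h2 : (2 : ℝ) ∈ {ε : ℝ | 0 < ε ∧ ∃ s : Finset X, s.Nonempty ∧ (∀ x ∈ s, ‖x‖ = 1) ∧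
      Metric.sphere (0 : X) 1 ⊆ ⋃ x ∈ s, Metric.closedBall x ε} := by
    refine ⟨two_pos, {x₀}, Finset.singleton_nonempty _, by simpa using hx₀, ?_⟩
    intro y hy
    simp only [mem_sphere_iff_norm, sub_zero] at hy
    simp only [Finset.mem_singleton, Set.mem_iUnion, Metric.mem_closedBall]
    refine ⟨x₀, rfl, ?_⟩
    calc dist y x₀ = ‖y - x₀‖ := dist_eq_norm _ _
      _ ≤ ‖y‖ + ‖x₀‖ := norm_sub_le _ _
      _ = 2 := by rw [hy, hx₀]; norm_num
  have hlb : ∀ ε ∈ {ε : ℝ | 0 < ε ∧ ∃ s : Finset X, s.Nonempty ∧ (∀ x ∈ s, ‖x‖ = 1) ∧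
      Metric.sphere (0 : X) 1 ⊆ ⋃ x ∈ s, Metric.closedBall x ε}, (1 : ℝ) ≤ ε := by
    rintro ε ⟨hεpos, s, hsne, hnorm, hcov⟩
    by_contra hlt
    push_neg at hlt
    set F : Submodule ℝ X := Submodule.span ℝ (s : Set X) with hF
    have hFfin : FiniteDimensional ℝ F :=
      FiniteDimensional.span_of_finite ℝ s.finite_toSet
    have hFc : IsClosed (F : Set X) := Submodule.closed_of_finiteDimensional F
    have hFne : ∃ x : X, x ∉ F := by
      by_contra h
      push_neg at h
      have ht : F = ⊤ := Submodule.eq_top_iff'.mpr h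
      haveI : FiniteDimensional ℝ (⊤ : Submodule ℝ X) := ht ▸ hFfin
      exact hinf ((Submodule.topEquiv (R := ℝ) (M := X)).finiteDimensional)
    set r : ℝ := (1 + ε) / 2 with hr
    have hεr : ε < r := by simp [hr]; linarith
    have hr1 : r < 1 := by simp [hr]; linarith
    obtain ⟨z, hz, hzd⟩ := riesz_lemma hFc hFne hr1
    have hzne : ‖z‖ ≠ 0 := by
      intro h
      exact hz (by simp [norm_eq_zero.mp h])
    set x : X := ‖z‖⁻¹ • z with hx
    have hxnorm : ‖x‖ = 1 := by
      rw [hx, norm_smul, norm_inv, norm_norm, inv_mul_cancel₀ hzne]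
    have hxs : x ∈ Metric.sphere (0 : X) 1 := by
      simp [mem_sphere_iff_norm, hxnorm]
    obtain ⟨c, hcmem, hcball⟩ := Set.mem_iUnion₂.mp (hcov hxs)
    have hdist : r ≤ ‖x - c‖ := by
      have hc : (‖z‖ • c) ∈ F := F.smul_mem _ (Submodule.subset_span hcmem)
      have := hzd _ hc
      have hsub : x - c = ‖z‖⁻¹ • (z - ‖z‖ • c) := by
        rw [hx, smul_sub, smul_smul, inv_mul_cancel₀ hzne, one_smul]
      have hxc : ‖x - c‖ = ‖z‖⁻¹ * ‖z - ‖z‖ • c‖ := by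
        rw [hsub, norm_smul, norm_inv, norm_norm]
      rw [hxc]
      calc r = ‖z‖⁻¹ * (r * ‖z‖) := by field_simp
        _ ≤ ‖z‖⁻¹ * ‖z - ‖z‖ • c‖ :=
            mul_le_mul_of_nonneg_left this (inv_nonneg.mpr (norm_nonneg z))
    have : dist x c ≤ ε := Metric.mem_closedBall.mp hcball
    rw [dist_eq_norm] at this
    linarith
  constructor
  · exact le_csInf ⟨2, h2⟩ hlb
  · exact csInf_le ⟨0, fun ε hε => le_of_lt hε.1⟩ h2
end
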